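/- Let p be a prime, d ∈ ℕ, τ ∈ (0,1), α > 1/2, and let γ = (γ_u) be weights with 0 < γ_u ≤ 1. Then there exists a subset Z ⊆ {1,…,p−1}^d with |Z| ≥ ⌈τ(p−1)^d⌉ such that for every z ∈ Z, every λ ∈ [1/2, α), and every h ∈ ℤ^d∖{0} with h·z ≡ 0 (mod p), one has r_{d,α,γ}(h) ≥ ( (1−τ)(p−1) / (2 V_d(α/λ, γ^{1/λ})) )^{λ}. -/

import Mathlib

open scoped BigOperators Classical

noncomputable section

/-- Real Riemann zeta value `ζ(β) = Σ_{k≥1} k^{-β}` (for `β > 1`). -/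
def zetaR (β : ℝ) : ℝ := ∑' k : ℕ, ((k + 1 : ℝ)) ^ (-β)

/-- Support of a frequency vector. -/
def suppF {d : ℕ} (h : Fin d → ℤ) : Finset (Fin d) := Finset.univ.filter (fun j => h j ≠ 0)

/-- The Korobov weight function `r_{d,α,γ}`. -/
def rKor (d : ℕ) (α : ℝ) (γ : Finset (Fin d) → ℝ) (h : Fin d → ℤ) : ℝ :=
  if h = 0 then 1 else (γ (suppF h))⁻¹ * ∏ j ∈ suppF h, |(h j : ℝ)| ^ α

/-- `V_d(β, γ) = Σ_{∅ ≠ u ⊆ {1,…,d}} γ_u (2ζ(β))^{|u|}`. -/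
def Vd (d : ℕ) (β : ℝ) (γ : Finset (Fin d) → ℝ) : ℝ :=
  ∑ u ∈ Finset.univ.filter (fun u : Finset (Fin d) => u.Nonempty), γ u * (2 * zetaR β) ^ u.card

/-- The set of generating vectors `{1,…,p-1}^d`. -/
def genSet (d p : ℕ) : Finset (Fin d → ℤ) :=
  Fintype.piFinset (fun _ => Finset.Icc (1 : ℤ) ((p : ℤ) - 1))

/-- Nonzero dual lattice points: `h ≠ 0` with `h·z ≡ 0 (mod p)`. -/
def dualLat (d p : ℕ) (z : Fin d → ℤ) : Set (Fin d → ℤ) :=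
  {h | h ≠ 0 ∧ (p : ℤ) ∣ ∑ j, h j * z j}

/-- Worst-case error of the lattice rule `Q_p^z` on the Korobov class. -/
def Edet (d : ℕ) (α : ℝ) (γ : Finset (Fin d) → ℝ) (p : ℕ) (z : Fin d → ℤ) : ℝ :=
  Real.sqrt (∑' h : dualLat d p z, ((rKor d α γ h.1) ^ 2)⁻¹)

/-- Quadrature error of the lattice rule `Q_p^z` on the function with
Fourier coefficients `a`. -/
def err (d p : ℕ) (z : Fin d → ℤ) (a : (Fin d → ℤ) → ℂ) : ℂ :=
  ∑' h : dualLat d p z, a h.1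

/-- The Korobov norm of the coefficient sequence `a`. -/
def korNorm (d : ℕ) (α : ℝ) (γ : Finset (Fin d) → ℝ) (a : (Fin d → ℤ) → ℂ) : ℝ :=
  Real.sqrt (∑' h : Fin d → ℤ, (rKor d α γ h) ^ 2 * ‖a h‖ ^ 2)

/-- Membership of the coefficient sequence in the Korobov class (`‖a‖ < ∞`). -/
def korSummable (d : ℕ) (α : ℝ) (γ : Finset (Fin d) → ℝ) (a : (Fin d → ℤ) → ℂ) : Prop :=
  Summable (fun h : Fin d → ℤ => (rKor d α γ h) ^ 2 * ‖a h‖ ^ 2)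

/-- The median (the `(N+1)/2`-th smallest value for odd `N`). -/
def medianR {N : ℕ} (f : Fin N → ℝ) : ℝ :=
  (List.insertionSort (· ≤ ·) (List.ofFn f)).getD ((N - 1) / 2) 0

/-- The median of complex numbers: medians of real and imaginary parts. -/
def medianC {N : ℕ} (f : Fin N → ℂ) : ℂ :=
  (medianR fun k => (f k).re) + (medianR fun k => (f k).im) * Complex.I

/-- The set `P_n` of primes `p` with `⌈n/2⌉ + 1 ≤ p ≤ n`. -/
def Pset (n : ℕ) : Finset ℕ := (Finset.Icc ((n + 1) / 2 + 1) n).filter Nat.Prime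

/-- The sample space of a single draw: pairs `(p, z)` with `p ∈ P_n`,
`z ∈ {1,…,p-1}^d`. -/
def allPairs (n d : ℕ) : Finset ((_ : ℕ) × (Fin d → ℤ)) :=
  (Pset n).sigma (fun p => genSet d p)

/-- The probability of one pair `(p,z)`: `p` uniform on `P_n`, and given `p`,
`z` uniform on `{1,…,p-1}^d`. -/
def pairWeight (n d : ℕ) (pz : (_ : ℕ) × (Fin d → ℤ)) : ℝ :=
  (((Pset n).card : ℝ))⁻¹ * (((pz.1 : ℝ) - 1) ^ d)⁻¹

/-- Number of repetitions used by the median algorithm `M_n`. -/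
def numReps (h : ℕ → ℝ) (n : ℕ) : ℕ := 2 * ⌈h n * Real.logb 2 n⌉₊ + 1

/-- Expectation, over the `N` independent draws of the median algorithm,
of a function `g` of the draws. -/
def expDraws (n d N : ℕ) (g : (Fin N → (_ : ℕ) × (Fin d → ℤ)) → ℝ) : ℝ :=
  ∑ ω ∈ Fintype.piFinset (fun _ : Fin N => allPairs n d),
    (∏ k, pairWeight n d (ω k)) * g ω

/-- Product weights `γ_u = ∏_{j ∈ u} γ_j`. -/
def prodW (d : ℕ) (γ : ℕ → ℝ) : Finset (Fin d) → ℝ := fun u => ∏ j ∈ u, γ (j : ℕ)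

lemma zeta_summable {β : ℝ} (hβ : 1 < β) :
    Summable (fun n : ℕ => ((n : ℝ) + 1) ^ (-β)) := by
  have h1 : Summable (fun n : ℕ => ((n : ℝ)) ^ (-β)) :=
    Real.summable_nat_rpow.2 (by linarith)
  have h2 := (summable_nat_add_iff (f := fun n : ℕ => ((n : ℝ)) ^ (-β)) 1).2 h1
  refine h2.congr fun n => ?_
  push_cast
  ring_nf

lemma one_le_zetaR {β : ℝ} (hβ : 1 < β) : 1 ≤ zetaR β := by
  have h0 : ((0 : ℕ) + 1 : ℝ) ^ (-β) = 1 := by norm_num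
  calc (1:ℝ) = ((0 : ℕ) + 1 : ℝ) ^ (-β) := h0.symm
    _ ≤ zetaR β := Summable.le_tsum (zeta_summable hβ) 0
        (fun j _ => Real.rpow_nonneg (by positivity) _)

lemma suppF_nonempty {d : ℕ} {h : Fin d → ℤ} (hh : h ≠ 0) : (suppF h).Nonempty := by
  obtain ⟨j, hj⟩ := Function.ne_iff.1 hh
  refine ⟨j, ?_⟩
  simp only [suppF, Finset.mem_filter, Finset.mem_univ, true_and]
  simpa using hj

lemma sum_Icc_le_zetaR {β : ℝ} (hβ : 1 < β) (M : ℕ) :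
    ∑ k ∈ Finset.Icc (1:ℤ) (M:ℤ), |((k:ℝ))| ^ (-β) ≤ zetaR β := by
  have : ∑ k ∈ Finset.Icc (1:ℤ) (M:ℤ), |((k:ℝ))| ^ (-β)
      = ∑ n ∈ Finset.range M, ((n:ℝ) + 1) ^ (-β) := by
    refine Finset.sum_nbij' (fun k => (k - 1).toNat) (fun n => (n:ℤ) + 1) ?_ ?_ ?_ ?_ ?_
    · intro a ha; simp only [Finset.mem_Icc] at ha; simp only [Finset.mem_range]; omega
    · intro a ha; simp only [Finset.mem_range] at ha; simp only [Finset.mem_Icc]; omega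
    · intro a ha; simp only [Finset.mem_Icc] at ha
      show ((a - 1).toNat : ℤ) + 1 = a; omega
    · intro a ha; simp only [Finset.mem_range] at ha
      show (((a:ℤ) + 1) - 1).toNat = a; omega
    · intro a ha; simp only [Finset.mem_Icc] at ha
      have h1 : (0:ℝ) < (a:ℝ) := by exact_mod_cast (by omega : (0:ℤ) < a)
      rw [abs_of_pos h1]
      congr 1
      have : ((a - 1).toNat : ℤ) = a - 1 := by omega
      have := congrArg (fun x : ℤ => (x : ℝ)) this
      push_cast at this ⊢
      linarith
  rw [this]
  exact Summable.sum_le_tsum _ (fun i _ => Real.rpow_nonneg (by positivity) _) (zeta_summable hβ)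

lemma S1_le {β : ℝ} (hβ : 1 < β) (M : ℕ) :
    ∑ k ∈ (Finset.Icc (-(M:ℤ)) (M:ℤ)).erase 0, |((k:ℝ))| ^ (-β) ≤ 2 * zetaR β := by
  set A : Finset ℤ := Finset.Icc (1:ℤ) (M:ℤ) with hA
  have hdisj : Disjoint (A.image (fun k => -k)) A := by
    rw [Finset.disjoint_left]
    intro a ha ha'
    simp only [hA, Finset.mem_image, Finset.mem_Icc] at ha ha'
    obtain ⟨b, hb, rfl⟩ := ha
    omega
  have hsub : (Finset.Icc (-(M:ℤ)) (M:ℤ)).erase 0 ⊆ (A.image (fun k => -k)) ∪ A := by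
    intro k hk
    simp only [Finset.mem_erase, Finset.mem_Icc] at hk
    simp only [Finset.mem_union, Finset.mem_image, hA, Finset.mem_Icc]
    rcases lt_or_gt_of_ne hk.1 with hlt | hgt
    · exact Or.inl ⟨-k, by omega, by omega⟩
    · exact Or.inr (by omega)
  have h1 : ∑ k ∈ (Finset.Icc (-(M:ℤ)) (M:ℤ)).erase 0, |((k:ℝ))| ^ (-β)
      ≤ ∑ k ∈ (A.image (fun k => -k)) ∪ A, |((k:ℝ))| ^ (-β) :=
    Finset.sum_le_sum_of_subset_of_nonneg hsub
      (fun i _ _ => Real.rpow_nonneg (abs_nonneg _) _)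
  have h2 : ∑ k ∈ (A.image (fun k => -k)) ∪ A, |((k:ℝ))| ^ (-β)
      = ∑ k ∈ A.image (fun k => -k), |((k:ℝ))| ^ (-β) + ∑ k ∈ A, |((k:ℝ))| ^ (-β) :=
    Finset.sum_union hdisj
  have h3 : ∑ k ∈ A.image (fun k => -k), |((k:ℝ))| ^ (-β) = ∑ k ∈ A, |((k:ℝ))| ^ (-β) := by
    rw [Finset.sum_image (by intro x _ y _ hxy; exact neg_injective hxy)]
    refine Finset.sum_congr rfl fun x _ => ?_
    push_cast
    rw [abs_neg]
  have h4 := sum_Icc_le_zetaR hβ M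
  calc ∑ k ∈ (Finset.Icc (-(M:ℤ)) (M:ℤ)).erase 0, |((k:ℝ))| ^ (-β)
      ≤ _ := h1
    _ = _ := h2
    _ ≤ 2 * zetaR β := by rw [h3]; linarith

lemma rKor_ne (d : ℕ) (α : ℝ) (γ : Finset (Fin d) → ℝ) {h : Fin d → ℤ} (hh : h ≠ 0) :
    rKor d α γ h = (γ (suppF h))⁻¹ * ∏ j ∈ suppF h, |(h j : ℝ)| ^ α := if_neg hh

lemma one_le_abs_supp {d : ℕ} {h : Fin d → ℤ} {j : Fin d} (hj : j ∈ suppF h) :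
    (1:ℝ) ≤ |(h j : ℝ)| := by
  simp only [suppF, Finset.mem_filter] at hj
  have : (1:ℤ) ≤ |h j| := Int.one_le_abs (by simpa using hj.2)
  calc (1:ℝ) ≤ ((|h j| : ℤ) : ℝ) := by exact_mod_cast this
    _ = |(h j : ℝ)| := by push_cast; ring

lemma factor_le_rKor {d : ℕ} {α : ℝ} (hα : 0 ≤ α) {γ : Finset (Fin d) → ℝ}
    (hγ : ∀ u : Finset (Fin d), u.Nonempty → 0 < γ u ∧ γ u ≤ 1)
    {h : Fin d → ℤ} (hh : h ≠ 0) {j : Fin d} (hj : j ∈ suppF h) {c : ℝ}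
    (hc : c ≤ |(h j : ℝ)| ^ α) : c ≤ rKor d α γ h := by
  have hne := suppF_nonempty hh
  have hγu := hγ _ hne
  have h1 : (1:ℝ) ≤ (γ (suppF h))⁻¹ := by
    rw [le_inv_comm₀] <;> simp [hγu.1, hγu.2]
  have hfac : ∀ i ∈ suppF h, (1:ℝ) ≤ |(h i : ℝ)| ^ α :=
    fun i hi => Real.one_le_rpow (one_le_abs_supp hi) hα
  have h2 : |(h j : ℝ)| ^ α ≤ ∏ i ∈ suppF h, |(h i : ℝ)| ^ α := by
    rw [← Finset.mul_prod_erase _ _ hj]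
    have hrest : (1:ℝ) ≤ ∏ i ∈ (suppF h).erase j, |(h i : ℝ)| ^ α := by
      have := Finset.prod_le_prod (s := (suppF h).erase j) (f := fun _ => (1:ℝ))
        (g := fun i => |(h i : ℝ)| ^ α) (by intros; norm_num)
        (fun i hi => hfac i (Finset.mem_of_mem_erase hi))
      simpa using this
    nlinarith [Real.rpow_nonneg (abs_nonneg ((h j : ℝ))) α, hfac j hj]
  have h3 : (0:ℝ) < ∏ i ∈ suppF h, |(h i : ℝ)| ^ α :=
    lt_of_lt_of_le one_pos (le_trans (hfac j hj) h2)
  rw [rKor_ne _ _ _ hh]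
  calc c ≤ |(h j : ℝ)| ^ α := hc
    _ ≤ ∏ i ∈ suppF h, |(h i : ℝ)| ^ α := h2
    _ = 1 * ∏ i ∈ suppF h, |(h i : ℝ)| ^ α := (one_mul _).symm
    _ ≤ (γ (suppF h))⁻¹ * ∏ i ∈ suppF h, |(h i : ℝ)| ^ α := by
        apply mul_le_mul_of_nonneg_right h1 h3.le

lemma one_le_rKor {d : ℕ} {α : ℝ} (hα : 0 ≤ α) {γ : Finset (Fin d) → ℝ}
    (hγ : ∀ u : Finset (Fin d), u.Nonempty → 0 < γ u ∧ γ u ≤ 1)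
    {h : Fin d → ℤ} (hh : h ≠ 0) : 1 ≤ rKor d α γ h := by
  obtain ⟨j, hj⟩ := suppF_nonempty hh
  exact factor_le_rKor hα hγ hh hj (Real.one_le_rpow (one_le_abs_supp hj) hα)

lemma s_eq {d : ℕ} {α lam : ℝ} (hlam : 0 < lam) {γ : Finset (Fin d) → ℝ}
    (hγ : ∀ u : Finset (Fin d), u.Nonempty → 0 < γ u ∧ γ u ≤ 1)
    {h : Fin d → ℤ} (hh : h ≠ 0) :
    ((rKor d α γ h) ^ (1/lam))⁻¹
      = γ (suppF h) ^ (1/lam) * ∏ j ∈ suppF h, |(h j : ℝ)| ^ (-(α/lam)) := by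
  have hγu := hγ _ (suppF_nonempty hh)
  have habs : ∀ j ∈ suppF h, (0:ℝ) ≤ |(h j : ℝ)| := fun j _ => abs_nonneg _
  rw [rKor_ne _ _ _ hh, Real.mul_rpow (inv_nonneg.2 hγu.1.le)
    (Finset.prod_nonneg (fun j hj => Real.rpow_nonneg (habs j hj) _)), mul_inv]
  congr 1
  · rw [Real.inv_rpow hγu.1.le, inv_inv]
  · rw [← Real.finset_prod_rpow _ _ (fun j hj => Real.rpow_nonneg (habs j hj) _) _,
      ← Finset.prod_inv_distrib]
    refine Finset.prod_congr rfl fun j hj => ?_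
    rw [← Real.rpow_mul (habs j hj), mul_one_div, ← Real.rpow_neg (habs j hj)]

lemma fiber_sum_le {d : ℕ} {β : ℝ} (hβ : 1 < β) (M : ℕ) {u : Finset (Fin d)} :
    ∑ h ∈ (Fintype.piFinset (fun _ : Fin d => Finset.Icc (-(M:ℤ)) (M:ℤ))).filter
        (fun h => suppF h = u), ∏ j ∈ u, |(h j : ℝ)| ^ (-β)
      ≤ (2 * zetaR β) ^ u.card := by
  set t : Fin d → Finset ℤ :=
    fun j => if j ∈ u then (Finset.Icc (-(M:ℤ)) (M:ℤ)).erase 0 else {0} with ht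
  set F : Fin d → ℤ → ℝ := fun j k => if j ∈ u then |(k:ℝ)| ^ (-β) else 1 with hF
  have hF0 : ∀ j k, 0 ≤ F j k := fun j k => by
    by_cases hj : j ∈ u <;> simp only [hF, if_pos, if_neg, hj, ite_true, ite_false]
    · positivity
    · norm_num
  have step1 : ∀ h ∈ (Fintype.piFinset fun _ : Fin d => Finset.Icc (-(M:ℤ)) (M:ℤ)).filter
      (fun h => suppF h = u), ∏ j ∈ u, |(h j : ℝ)| ^ (-β) = ∏ j, F j (h j) := by
    intro h hh
    rw [← Finset.prod_mul_prod_compl u (fun j => F j (h j))]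
    have e1 : ∏ j ∈ u, F j (h j) = ∏ j ∈ u, |(h j : ℝ)| ^ (-β) :=
      Finset.prod_congr rfl fun j hj => by simp [hF, hj]
    have e2 : ∏ j ∈ uᶜ, F j (h j) = 1 :=
      Finset.prod_eq_one fun j hj => by simp [hF, (Finset.mem_compl.1 hj)]
    rw [e1, e2, mul_one]
  rw [Finset.sum_congr rfl step1]
  have hsub : (Fintype.piFinset fun _ : Fin d => Finset.Icc (-(M:ℤ)) (M:ℤ)).filter
      (fun h => suppF h = u) ⊆ Fintype.piFinset t := by
    intro h hh
    simp only [Finset.mem_filter, Fintype.mem_piFinset] at hh ⊢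
    intro j
    by_cases hj : j ∈ u
    · simp only [ht, if_pos hj, Finset.mem_erase]
      refine ⟨?_, hh.1 j⟩
      have : j ∈ suppF h := hh.2 ▸ hj
      simpa [suppF] using this
    · simp only [ht, if_neg hj, Finset.mem_singleton]
      by_contra hne
      exact hj (hh.2 ▸ (by simpa [suppF] using hne : j ∈ suppF h))
  calc _ ≤ ∑ h ∈ Fintype.piFinset t, ∏ j, F j (h j) :=
        Finset.sum_le_sum_of_subset_of_nonneg hsub
          (fun h _ _ => Finset.prod_nonneg fun j _ => hF0 j _)
    _ = ∏ j, ∑ k ∈ t j, F j k := (Finset.prod_univ_sum t F).symm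
    _ ≤ (2 * zetaR β) ^ u.card := by
        rw [← Finset.prod_mul_prod_compl u]
        have e2 : ∏ j ∈ uᶜ, ∑ k ∈ t j, F j k = 1 := Finset.prod_eq_one fun j hj => by
          simp [ht, hF, (Finset.mem_compl.1 hj)]
        have hζ := one_le_zetaR hβ
        have e1 : ∏ j ∈ u, ∑ k ∈ t j, F j k ≤ (2 * zetaR β) ^ u.card := by
          have hle : ∀ j ∈ u, ∑ k ∈ t j, F j k ≤ 2 * zetaR β := by
            intro j hj
            have heq : ∑ k ∈ t j, F j k
                = ∑ k ∈ (Finset.Icc (-(M:ℤ)) (M:ℤ)).erase 0, |(k:ℝ)| ^ (-β) := by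
              simp [ht, hF, hj]
            rw [heq]; exact S1_le hβ M
          calc ∏ j ∈ u, ∑ k ∈ t j, F j k ≤ ∏ j ∈ u, (2 * zetaR β) :=
              Finset.prod_le_prod (fun j _ => Finset.sum_nonneg fun k _ => hF0 j _) hle
            _ = (2 * zetaR β) ^ u.card := by rw [Finset.prod_const]
        rw [e2, mul_one]; exact e1

lemma genSet_card (d p : ℕ) : (genSet d p).card = (p-1)^d := by
  rw [genSet, Fintype.card_piFinset]
  have : ∀ j : Fin d, (Finset.Icc (1:ℤ) ((p:ℤ)-1)).card = p - 1 := by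
    intro j; rw [Int.card_Icc]; omega
  rw [Finset.prod_congr rfl (fun j _ => this j), Finset.prod_const, Finset.card_univ,
    Fintype.card_fin]

lemma count_dvd_le (p d : ℕ) (hp : p.Prime) (h : Fin d → ℤ) {j₀ : Fin d}
    (hj₀ : ¬ (p:ℤ) ∣ h j₀) :
    ((genSet d p).filter (fun z => (p:ℤ) ∣ ∑ j, h j * z j)).card ≤ (p-1)^(d-1) := by
  have hp2 : (2:ℤ) ≤ (p:ℤ) := by exact_mod_cast hp.two_le
  set t' : Fin d → Finset ℤ :=
    fun j => if j = j₀ then ({0} : Finset ℤ) else Finset.Icc 1 ((p:ℤ)-1) with ht'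
  have hmaps : ∀ z ∈ (genSet d p).filter (fun z => (p:ℤ) ∣ ∑ j, h j * z j),
      Function.update z j₀ 0 ∈ Fintype.piFinset t' := by
    intro z hz
    rw [Finset.mem_filter] at hz
    have hz1 := hz.1
    rw [genSet, Fintype.mem_piFinset] at hz1
    rw [Fintype.mem_piFinset]
    intro j
    by_cases hj : j = j₀
    · subst hj; simp [ht', Function.update_self]
    · simp only [ht', if_neg hj]
      rw [Function.update_of_ne hj]
      exact hz1 j
  have hinj : Set.InjOn (fun z => Function.update z j₀ 0)
      (((genSet d p).filter (fun z => (p:ℤ) ∣ ∑ j, h j * z j)) : Set (Fin d → ℤ)) := by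
    intro z hz z' hz' heq
    rw [Finset.mem_coe, Finset.mem_filter] at hz hz'
    obtain ⟨hz1, hz2⟩ := hz
    obtain ⟨hz1', hz2'⟩ := hz'
    rw [genSet, Fintype.mem_piFinset] at hz1 hz1'
    have hoff : ∀ j, j ≠ j₀ → z j = z' j := by
      intro j hj
      have := congrFun heq j
      simpa [Function.update_of_ne hj] using this
    have hdvd : (p:ℤ) ∣ h j₀ * (z j₀ - z' j₀) := by
      have key : ∑ j, h j * z j - ∑ j, h j * z' j = h j₀ * (z j₀ - z' j₀) := by
        rw [← Finset.sum_sub_distrib, Finset.sum_eq_single j₀]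
        · ring
        · intro b _ hb; rw [hoff b hb]; ring
        · intro hb; exact absurd (Finset.mem_univ j₀) hb
      rw [← key]; exact dvd_sub hz2 hz2'
    have hz0 : z j₀ = z' j₀ := by
      rcases (Nat.prime_iff_prime_int.mp hp).dvd_mul.mp hdvd with h1 | h2
      · exact absurd h1 hj₀
      · by_contra hne
        have habs : (p:ℤ) ≤ |z j₀ - z' j₀| :=
          Int.le_of_dvd (abs_pos.2 (sub_ne_zero.2 hne)) ((dvd_abs _ _).2 h2)
        have b1 := Finset.mem_Icc.1 (hz1 j₀)
        have b2 := Finset.mem_Icc.1 (hz1' j₀)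
        have : |z j₀ - z' j₀| ≤ (p:ℤ) - 2 := abs_le.2 ⟨by omega, by omega⟩
        omega
    funext j
    by_cases hj : j = j₀
    · rw [hj]; exact hz0
    · exact hoff j hj
  have hcard := Finset.card_le_card_of_injOn _ hmaps hinj
  refine hcard.trans (le_of_eq ?_)
  rw [Fintype.card_piFinset]
  rw [← Finset.mul_prod_erase Finset.univ (fun j => (t' j).card) (Finset.mem_univ j₀)]
  have hrest : ∀ j ∈ Finset.univ.erase j₀, (t' j).card = p - 1 := by
    intro j hj
    simp only [ht']
    rw [if_neg (Finset.mem_erase.1 hj).1, Int.card_Icc]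
    clear hcard hmaps hinj
    omega
  rw [Finset.prod_congr rfl hrest, Finset.prod_const,
    Finset.card_erase_of_mem (Finset.mem_univ j₀), Finset.card_univ, Fintype.card_fin]
  simp [ht']

lemma factor_le_rKor' {d : ℕ} {α : ℝ} (hα : 0 ≤ α) {γ : Finset (Fin d) → ℝ}
    (hγ : ∀ u : Finset (Fin d), u.Nonempty → 0 < γ u ∧ γ u ≤ 1)
    {h : Fin d → ℤ} (hh : h ≠ 0) {j : Fin d} (hj : j ∈ suppF h) {c : ℝ} (hc0 : 0 ≤ c)
    (hc : c ≤ |(h j : ℝ)| ^ α) : (γ (suppF h))⁻¹ * c ≤ rKor d α γ h := by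
  have hγu := hγ _ (suppF_nonempty hh)
  have hfac : ∀ i ∈ suppF h, (1:ℝ) ≤ |(h i : ℝ)| ^ α :=
    fun i hi => Real.one_le_rpow (one_le_abs_supp hi) hα
  have h2 : |(h j : ℝ)| ^ α ≤ ∏ i ∈ suppF h, |(h i : ℝ)| ^ α := by
    rw [← Finset.mul_prod_erase _ _ hj]
    have hrest : (1:ℝ) ≤ ∏ i ∈ (suppF h).erase j, |(h i : ℝ)| ^ α := by
      have := Finset.prod_le_prod (s := (suppF h).erase j) (f := fun _ => (1:ℝ))
        (g := fun i => |(h i : ℝ)| ^ α) (by intros; norm_num)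
        (fun i hi => hfac i (Finset.mem_of_mem_erase hi))
      simpa using this
    nlinarith [Real.rpow_nonneg (abs_nonneg ((h j : ℝ))) α, hfac j hj]
  rw [rKor_ne _ _ _ hh]
  exact mul_le_mul_of_nonneg_left (hc.trans h2) (inv_nonneg.2 hγu.1.le)

def goodSet (d p : ℕ) (α : ℝ) (γ : Finset (Fin d) → ℝ) (t : ℝ) : Finset (Fin d → ℤ) :=
  (genSet d p).filter
    (fun z => ∀ h : Fin d → ℤ, h ≠ 0 → (p:ℤ) ∣ ∑ j, h j * z j → t ≤ rKor d α γ h)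

lemma markov_core (p d : ℕ) (hp : p.Prime) (τ α : ℝ) (hτ : τ ∈ Set.Ioo (0:ℝ) 1)
    (γ : Finset (Fin d) → ℝ) (hγ : ∀ u : Finset (Fin d), u.Nonempty → 0 < γ u ∧ γ u ≤ 1)
    (hd : 0 < d) (lam : ℝ) (hlam1 : 1/2 ≤ lam) (hlam2 : lam < α) :
    ⌈τ * ((p:ℝ)-1)^d⌉₊ ≤ (goodSet d p α γ
      (((1-τ) * ((p:ℝ)-1) / (2 * Vd d (α/lam) (fun u => γ u ^ (1/lam)))) ^ lam)).card := by
  obtain ⟨hτ0, hτ1⟩ := hτ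
  have hlam0 : 0 < lam := by linarith
  have hα0 : 0 < α := lt_trans hlam0 hlam2
  set β := α / lam with hβdef
  have hβ : 1 < β := (one_lt_div hlam0).2 hlam2
  set γ' : Finset (Fin d) → ℝ := fun u => γ u ^ (1/lam) with hγ'def
  have hζ : 1 ≤ zetaR β := one_le_zetaR hβ
  set V := Vd d β γ' with hVdef
  have hγ'pos : ∀ u : Finset (Fin d), u.Nonempty → 0 < γ' u := fun u hu =>
    Real.rpow_pos_of_pos (hγ u hu).1 _
  have hVterm : ∀ u ∈ Finset.univ.filter (fun u : Finset (Fin d) => u.Nonempty),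
      0 < γ' u * (2 * zetaR β) ^ u.card := by
    intro u hu
    have hu' := (Finset.mem_filter.1 hu).2
    have h2ζ : (0:ℝ) < 2 * zetaR β := by linarith
    exact mul_pos (hγ'pos u hu') (pow_pos h2ζ _)
  have hUne : (Finset.univ.filter (fun u : Finset (Fin d) => u.Nonempty)).Nonempty := by
    refine ⟨{⟨0, hd⟩}, ?_⟩
    simp
  have hV : 0 < V := Finset.sum_pos hVterm hUne
  have hp2 : (2:ℝ) ≤ (p:ℝ) := by exact_mod_cast hp.two_le
  have hX1 : (1:ℝ) ≤ (p:ℝ) - 1 := by linarith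
  set T := (1-τ) * ((p:ℝ)-1) / (2*V) with hTdef
  have hT : 0 < T := div_pos (by nlinarith) (by linarith)
  set t := T ^ lam with htdef
  have ht : 0 < t := Real.rpow_pos_of_pos hT _
  have hVge : ∀ u : Finset (Fin d), u.Nonempty → γ' u ≤ V := by
    intro u hu
    have h1 : γ' u * 1 ≤ γ' u * (2*zetaR β) ^ u.card :=
      mul_le_mul_of_nonneg_left (one_le_pow₀ (by linarith)) (hγ'pos u hu).le
    calc γ' u = γ' u * 1 := (mul_one _).symm
      _ ≤ γ' u * (2*zetaR β) ^ u.card := h1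
      _ ≤ V := Finset.single_le_sum (fun i hi => (hVterm i hi).le) (by simp [hu])
  -- every `h` with small weight has a coordinate not divisible by `p`
  have keyDvd : ∀ h : Fin d → ℤ, h ≠ 0 → rKor d α γ h < t → ∃ j, ¬ (p:ℤ) ∣ h j := by
    intro h hh hr
    by_contra hall
    push_neg at hall
    obtain ⟨j₀, hj₀⟩ := suppF_nonempty hh
    have hju : h j₀ ≠ 0 := by
      have := (Finset.mem_filter.1 hj₀).2
      simpa using this
    have hple : (p:ℝ) ≤ |(h j₀ : ℝ)| := by
      have h1 : (p:ℤ) ≤ |h j₀| := Int.le_of_dvd (abs_pos.2 hju) ((dvd_abs _ _).2 (hall j₀))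
      calc (p:ℝ) = ((p:ℤ):ℝ) := by norm_num
        _ ≤ ((|h j₀| : ℤ) : ℝ) := by exact_mod_cast h1
        _ = |(h j₀ : ℝ)| := by push_cast; ring
    have hune := suppF_nonempty hh
    have hγu := hγ _ hune
    have hT2 : T ≤ (p:ℝ) * (γ' (suppF h))⁻¹ := by
      have h2V : γ' (suppF h) ≤ 2 * V := by nlinarith [hVge _ hune, hV]
      have hdd : (1-τ) * ((p:ℝ)-1) / (2*V) ≤ (p:ℝ) / γ' (suppF h) :=
        div_le_div₀ (by linarith) (by nlinarith) (hγ'pos _ hune) h2V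
      calc T ≤ (p:ℝ) / γ' (suppF h) := hdd
        _ = (p:ℝ) * (γ' (suppF h))⁻¹ := div_eq_mul_inv _ _
    have hstep : t ≤ (γ (suppF h))⁻¹ * (p:ℝ) ^ α := by
      have h3 : t ≤ ((p:ℝ) * (γ' (suppF h))⁻¹) ^ lam :=
        Real.rpow_le_rpow hT.le hT2 hlam0.le
      have h4 : ((p:ℝ) * (γ' (suppF h))⁻¹) ^ lam = (p:ℝ) ^ lam * (γ (suppF h))⁻¹ := by
        rw [Real.mul_rpow (by positivity) (inv_nonneg.2 (hγ'pos _ hune).le),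
          Real.inv_rpow (hγ'pos _ hune).le, hγ'def]
        congr 2
        rw [← Real.rpow_mul hγu.1.le, one_div_mul_cancel hlam0.ne', Real.rpow_one]
      have h5 : (p:ℝ) ^ lam ≤ (p:ℝ) ^ α :=
        Real.rpow_le_rpow_of_exponent_le (by linarith) hlam2.le
      have h6 : (0:ℝ) ≤ (γ (suppF h))⁻¹ := inv_nonneg.2 hγu.1.le
      calc t ≤ (p:ℝ) ^ lam * (γ (suppF h))⁻¹ := h4 ▸ h3
        _ ≤ (p:ℝ) ^ α * (γ (suppF h))⁻¹ := mul_le_mul_of_nonneg_right h5 h6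
        _ = (γ (suppF h))⁻¹ * (p:ℝ) ^ α := mul_comm _ _
    have hfin : t ≤ rKor d α γ h := by
      refine hstep.trans (factor_le_rKor' hα0.le hγ hh hj₀ (by positivity) ?_)
      exact Real.rpow_le_rpow (by positivity) hple hα0.le
    exact absurd hfin (not_le.2 hr)
  set M := ⌈T ^ (lam/α)⌉₊ with hMdef
  have keyBox : ∀ h : Fin d → ℤ, h ≠ 0 → rKor d α γ h < t →
      ∀ j, h j ∈ Finset.Icc (-(M:ℤ)) (M:ℤ) := by
    intro h hh hr j
    rw [Finset.mem_Icc]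
    by_contra hcon
    have habs : (M:ℤ) + 1 ≤ |h j| := by
      rcases abs_cases (h j) with ⟨he, _⟩ | ⟨he, _⟩ <;> omega
    have hj0 : h j ≠ 0 := by
      intro e
      rw [e] at habs
      simp at habs
      omega
    have hjsupp : j ∈ suppF h := by simp [suppF, hj0]
    have h1 : T ^ (lam/α) ≤ (M:ℝ) := Nat.le_ceil _
    have h2 : (M:ℝ) + 1 ≤ |(h j : ℝ)| := by
      calc (M:ℝ) + 1 = (((M:ℤ) + 1 : ℤ):ℝ) := by push_cast; ring
        _ ≤ ((|h j| : ℤ):ℝ) := by exact_mod_cast habs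
        _ = |(h j : ℝ)| := by push_cast; ring
    have h3 : t ≤ |(h j : ℝ)| ^ α := by
      have e1 : t = (T ^ (lam/α)) ^ α := by
        rw [htdef, ← Real.rpow_mul hT.le, div_mul_cancel₀ _ hα0.ne']
      rw [e1]
      exact Real.rpow_le_rpow (Real.rpow_nonneg hT.le _) (by linarith) hα0.le
    exact absurd (factor_le_rKor hα0.le hγ hh hjsupp h3) (not_le.2 hr)
  set box := Fintype.piFinset (fun _ : Fin d => Finset.Icc (-(M:ℤ)) (M:ℤ)) with hbox
  set H := box.filter (fun h : Fin d → ℤ => h ≠ 0 ∧ rKor d α γ h < t) with hHdef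
  have hrnn : ∀ h : Fin d → ℤ, 0 ≤ rKor d α γ h := by
    intro h
    by_cases hh : h = 0
    · simp [rKor, hh]
    · exact le_trans zero_le_one (one_le_rKor hα0.le hγ hh)
  have hsnn : ∀ h : Fin d → ℤ, 0 ≤ ((rKor d α γ h) ^ (1/lam))⁻¹ :=
    fun h => inv_nonneg.2 (Real.rpow_nonneg (hrnn h) _)
  have hsumH : ∑ h ∈ H, ((rKor d α γ h) ^ (1/lam))⁻¹ ≤ V := by
    have hHB : H ⊆ box.filter (fun h : Fin d → ℤ => h ≠ 0) := by
      intro h hh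
      rw [hHdef, Finset.mem_filter] at hh
      exact Finset.mem_filter.2 ⟨hh.1, hh.2.1⟩
    have h1 : ∑ h ∈ H, ((rKor d α γ h) ^ (1/lam))⁻¹
        ≤ ∑ h ∈ box.filter (fun h : Fin d → ℤ => h ≠ 0), ((rKor d α γ h) ^ (1/lam))⁻¹ :=
      Finset.sum_le_sum_of_subset_of_nonneg hHB (fun h _ _ => hsnn h)
    have hmaps : ∀ h ∈ box.filter (fun h : Fin d → ℤ => h ≠ 0),
        suppF h ∈ Finset.univ.filter (fun u : Finset (Fin d) => u.Nonempty) := by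
      intro h hh
      simp only [Finset.mem_filter, Finset.mem_univ, true_and]
      exact suppF_nonempty (Finset.mem_filter.1 hh).2
    have h2 := Finset.sum_fiberwise_of_maps_to hmaps (fun h => ((rKor d α γ h) ^ (1/lam))⁻¹)
    refine h1.trans ?_
    rw [← h2, hVdef, Vd]
    refine Finset.sum_le_sum ?_
    intro u hu
    have hu' := (Finset.mem_filter.1 hu).2
    have hfib : ∀ h ∈ (box.filter (fun h : Fin d → ℤ => h ≠ 0)).filter
        (fun h => suppF h = u), ((rKor d α γ h) ^ (1/lam))⁻¹
          = γ' u * ∏ j ∈ u, |(h j : ℝ)| ^ (-β) := by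
      intro h hh
      simp only [Finset.mem_filter] at hh
      obtain ⟨⟨hbox', hh0⟩, hsupp⟩ := hh
      rw [s_eq hlam0 hγ hh0, hsupp, hγ'def, hβdef]
    rw [Finset.sum_congr rfl hfib, ← Finset.mul_sum]
    have h3 : ∑ h ∈ (box.filter (fun h : Fin d → ℤ => h ≠ 0)).filter (fun h => suppF h = u),
        ∏ j ∈ u, |(h j : ℝ)| ^ (-β) ≤ (2 * zetaR β) ^ u.card := by
      refine le_trans (Finset.sum_le_sum_of_subset_of_nonneg ?_ ?_) (fiber_sum_le hβ M)
      · intro h hh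
        simp only [Finset.mem_filter, hbox] at hh ⊢
        exact ⟨hh.1.1, hh.2⟩
      · intro h _ _
        exact Finset.prod_nonneg fun j _ => Real.rpow_nonneg (abs_nonneg _) _
    exact mul_le_mul_of_nonneg_left h3 (hγ'pos u hu').le
  have hHcard : (H.card : ℝ) * T⁻¹ ≤ V := by
    have h1 : ∀ h ∈ H, T⁻¹ ≤ ((rKor d α γ h) ^ (1/lam))⁻¹ := by
      intro h hh
      obtain ⟨hh0, hr⟩ := (Finset.mem_filter.1 hh).2
      have hr1 : (0:ℝ) < rKor d α γ h := lt_of_lt_of_le one_pos (one_le_rKor hα0.le hγ hh0)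
      have h2 : (rKor d α γ h) ^ (1/lam) < T := by
        have h3 := Real.rpow_lt_rpow hr1.le hr (by positivity : (0:ℝ) < 1/lam)
        rwa [htdef, ← Real.rpow_mul hT.le, mul_one_div, div_self hlam0.ne',
          Real.rpow_one] at h3
      have h4 : 0 < (rKor d α γ h) ^ (1/lam) := Real.rpow_pos_of_pos hr1 _
      have h5 := one_div_lt_one_div_of_lt h4 h2
      rw [one_div, one_div] at h5
      exact h5.le
    calc (H.card : ℝ) * T⁻¹ = ∑ _h ∈ H, T⁻¹ := by rw [Finset.sum_const, nsmul_eq_mul]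
      _ ≤ ∑ h ∈ H, ((rKor d α γ h) ^ (1/lam))⁻¹ := Finset.sum_le_sum h1
      _ ≤ V := hsumH
  have hHcard' : (H.card : ℝ) ≤ T * V := by
    have h6 := mul_le_mul_of_nonneg_right hHcard hT.le
    rw [mul_assoc, inv_mul_cancel₀ hT.ne', mul_one] at h6
    linarith
  set P : (Fin d → ℤ) → Prop := fun z => ∀ h : Fin d → ℤ, h ≠ 0 →
    (p:ℤ) ∣ ∑ j, h j * z j → t ≤ rKor d α γ h with hPdef
  set Bad := (genSet d p).filter (fun z => ¬ P z) with hBad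
  have hBadsub : Bad ⊆ H.biUnion
      (fun h => (genSet d p).filter (fun z => (p:ℤ) ∣ ∑ j, h j * z j)) := by
    intro z hz
    rw [hBad, Finset.mem_filter] at hz
    obtain ⟨hzgen, hnP⟩ := hz
    have hnP' : ¬ ∀ h : Fin d → ℤ, h ≠ 0 → (p:ℤ) ∣ ∑ j, h j * z j → t ≤ rKor d α γ h := hnP
    push_neg at hnP'
    obtain ⟨h, hh0, hdvd, hlt⟩ := hnP'
    refine Finset.mem_biUnion.2 ⟨h, ?_, Finset.mem_filter.2 ⟨hzgen, hdvd⟩⟩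
    rw [hHdef, Finset.mem_filter]
    exact ⟨Fintype.mem_piFinset.2 (keyBox h hh0 hlt), hh0, hlt⟩
  have hBadcard : Bad.card ≤ H.card * (p-1)^(d-1) := by
    have hstep : ∀ h ∈ H,
        ((genSet d p).filter (fun z => (p:ℤ) ∣ ∑ j, h j * z j)).card ≤ (p-1)^(d-1) := by
      intro h hh
      obtain ⟨hh0, hr⟩ := (Finset.mem_filter.1 hh).2
      obtain ⟨j₀, hj₀⟩ := keyDvd h hh0 hr
      exact count_dvd_le p d hp h hj₀
    calc Bad.card
        ≤ (H.biUnion (fun h => (genSet d p).filter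
            (fun z => (p:ℤ) ∣ ∑ j, h j * z j))).card := Finset.card_le_card hBadsub
      _ ≤ ∑ h ∈ H, ((genSet d p).filter
            (fun z => (p:ℤ) ∣ ∑ j, h j * z j)).card := Finset.card_biUnion_le
      _ ≤ ∑ _h ∈ H, (p-1)^(d-1) := Finset.sum_le_sum hstep
      _ = H.card * (p-1)^(d-1) := by rw [Finset.sum_const, smul_eq_mul]
  have hgen : (genSet d p).card = (p-1)^d := genSet_card d p
  have hp1 : 1 ≤ p := hp.pos
  have hcast : ((p-1:ℕ):ℝ) = (p:ℝ) - 1 := by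
    push_cast [Nat.cast_sub hp1]
    ring
  have hXd : (0:ℝ) < ((p:ℝ)-1)^d := by positivity
  have hb : (Bad.card : ℝ) ≤ (1-τ)/2 * ((p:ℝ)-1)^d := by
    have e2 : ((H.card * (p-1)^(d-1) : ℕ) : ℝ) = (H.card:ℝ) * ((p:ℝ)-1)^(d-1) := by
      push_cast [hcast]
      ring
    have hTV : T * V = (1-τ)*((p:ℝ)-1)/2 := by
      rw [hTdef]
      field_simp
    have hpow : ((p:ℝ)-1) * ((p:ℝ)-1)^(d-1) = ((p:ℝ)-1)^d := by
      rw [← pow_succ']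
      congr 1
      omega
    calc (Bad.card:ℝ) ≤ ((H.card * (p-1)^(d-1) : ℕ) : ℝ) := by exact_mod_cast hBadcard
      _ = (H.card:ℝ) * ((p:ℝ)-1)^(d-1) := e2
      _ ≤ (T*V) * ((p:ℝ)-1)^(d-1) := mul_le_mul_of_nonneg_right hHcard' (by positivity)
      _ = (1-τ)/2 * (((p:ℝ)-1) * ((p:ℝ)-1)^(d-1)) := by rw [hTV]; ring
      _ = (1-τ)/2 * ((p:ℝ)-1)^d := by rw [hpow]
  have hgs : goodSet d p α γ t = (genSet d p).filter P := rfl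
  have hGB := Finset.card_filter_add_card_filter_not (s := genSet d p) P
  have e0 : (goodSet d p α γ t).card + Bad.card = (p-1)^d := by
    rw [hgs, hBad, hGB, hgen]
  have e1 : ((goodSet d p α γ t).card : ℝ) + (Bad.card : ℝ) = ((p:ℝ)-1)^d := by
    have := congrArg (fun n : ℕ => (n:ℝ)) e0
    push_cast [hcast] at this
    exact this
  rw [Nat.ceil_le]
  clear_value β γ' V T t M box H Bad P
  have hy : τ * ((p:ℝ)-1)^d ≤ ((p:ℝ)-1)^d := by
    have h7 := mul_le_mul_of_nonneg_right (le_of_lt hτ1) hXd.le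
    linarith
  linarith [hb, e1, hy]

def thrD (d p : ℕ) (τ α : ℝ) (γ : Finset (Fin d) → ℝ) (l : ℝ) : ℝ :=
  ((1 - τ) * ((p : ℝ) - 1) / (2 * Vd d (α / l) (fun u => γ u ^ (1 / l)))) ^ l

/-- a large set of generating vectors whose nonzero dual lattice
points all have a large Korobov weight. -/
theorem stmt_16 (p d : ℕ) (hp : p.Prime) (τ α : ℝ) (hτ : τ ∈ Set.Ioo (0 : ℝ) 1)
    (hα : 1 / 2 < α) (γ : Finset (Fin d) → ℝ)
    (hγ : ∀ u : Finset (Fin d), u.Nonempty → 0 < γ u ∧ γ u ≤ 1) :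
    ∃ Z : Finset (Fin d → ℤ), Z ⊆ genSet d p ∧
      ⌈τ * ((p : ℝ) - 1) ^ d⌉₊ ≤ Z.card ∧
      ∀ z ∈ Z, ∀ lam ∈ Set.Ico (1 / 2 : ℝ) α, ∀ h : Fin d → ℤ, h ≠ 0 →
        (p : ℤ) ∣ ∑ j, h j * z j →
        ((1 - τ) * ((p : ℝ) - 1) / (2 * Vd d (α / lam) (fun u => γ u ^ (1 / lam)))) ^ lam ≤
          rKor d α γ h := by
  rcases Nat.eq_zero_or_pos d with hd0 | hd
  · subst hd0
    refine ⟨genSet 0 p, Finset.Subset.refl _, ?_, ?_⟩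
    · have h1 : (genSet 0 p).card = 1 := by rw [genSet_card]; norm_num
      rw [h1]
      refine Nat.ceil_le.2 ?_
      rw [pow_zero, mul_one]
      exact_mod_cast hτ.2.le
    · intro z _ lam _ h hh _
      exact absurd (funext fun j => Fin.elim0 j) hh
  · have hlamIco : (1/2 : ℝ) ∈ Set.Ico (1/2:ℝ) α := ⟨le_refl _, hα⟩
    set S : Set ℕ :=
      (fun l => (goodSet d p α γ (thrD d p τ α γ l)).card) '' (Set.Ico (1/2:ℝ) α) with hS
    have hSne : S.Nonempty := ⟨_, ⟨1/2, hlamIco, rfl⟩⟩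
    obtain ⟨lam₀, hlam₀, heq⟩ := Nat.sInf_mem hSne
    refine ⟨goodSet d p α γ (thrD d p τ α γ lam₀), Finset.filter_subset _ _, ?_, ?_⟩
    · exact markov_core p d hp τ α hτ γ hγ hd lam₀ hlam₀.1 hlam₀.2
    · intro z hz lam hlam h hh hdvd
      have hsub : goodSet d p α γ (thrD d p τ α γ lam₀)
          ⊆ goodSet d p α γ (thrD d p τ α γ lam) := by
        rcases le_total (thrD d p τ α γ lam) (thrD d p τ α γ lam₀) with hle | hle
        · intro w hw
          rw [goodSet, Finset.mem_filter] at hw ⊢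
          exact ⟨hw.1, fun g hg hgd => le_trans hle (hw.2 g hg hgd)⟩
        · have hsub2 : goodSet d p α γ (thrD d p τ α γ lam)
              ⊆ goodSet d p α γ (thrD d p τ α γ lam₀) := by
            intro w hw
            rw [goodSet, Finset.mem_filter] at hw ⊢
            exact ⟨hw.1, fun g hg hgd => le_trans hle (hw.2 g hg hgd)⟩
          have hcard : (goodSet d p α γ (thrD d p τ α γ lam₀)).card
              ≤ (goodSet d p α γ (thrD d p τ α γ lam)).card := by
            have heq' : (goodSet d p α γ (thrD d p τ α γ lam₀)).card = sInf S := heq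
            rw [heq']
            exact Nat.sInf_le ⟨lam, hlam, rfl⟩
          intro w hw
          rwa [Finset.eq_of_subset_of_card_le hsub2 hcard]
      have hmem := (Finset.mem_filter.1 (hsub hz)).2
      exact hmem h hh hdvd

end
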